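/- arXiv:1903.08992 — 3 statements merged into one kernel-verified Lean document; each statement's English description precedes it below -/
import Mathlib

section
/- Let E be a real inner product space, let ξ_1, …, ξ_s (s ≥ 1) be orthonormal vectors in E, let T be a unit vector with ⟨T, ξ_α⟩ = c for the same real number c and every α = 1, …, s, and let q be a real number. Then ‖(1 − s c²)·Σ_{α=1}^s ξ_α + (s c − q)·(c·Σ_{α=1}^s ξ_α) + (q s c² − s c)·T‖² = (1 − s c²)·s·(1 − q c)², and consequently, if s c² ≤ 1, the quantity κ₂ = √(s c² q² − s c² s + s² c² − 2 s c q + s) equals √s·|1 − q c|. -/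
open scoped RealInnerProductSpace BigOperators

/-- Slant case of the curvature computation: for orthonormal `ξ 1, …, ξ s`
(with `s ≥ 1`), a unit vector `T` with `⟪T, ξ α⟫ = c` for every `α`, and `q : ℝ`,
one has `‖(1 − sc²)·Σξ + (sc − q)·(c·Σξ) + (qsc² − sc)·T‖² = (1 − sc²)·s·(1 − qc)²`,
and consequently, if `sc² ≤ 1`,
`√(sc²q² − sc²s + s²c² − 2scq + s) = √s·|1 − qc|`. -/
theorem slant_curvature_kappa2 {E : Type*} [NormedAddCommGroup E]
    [InnerProductSpace ℝ E] {s : ℕ} (hs : 1 ≤ s) (ξ : Fin s → E)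
    (hξ : Orthonormal ℝ ξ) (T : E) (hT : ‖T‖ = 1) (c : ℝ)
    (hc : ∀ α : Fin s, ⟪T, ξ α⟫ = c) (q : ℝ) :
    (‖(1 - s * c ^ 2) • (∑ α : Fin s, ξ α) +
        (s * c - q) • (c • ∑ α : Fin s, ξ α) +
        (q * s * c ^ 2 - s * c) • T‖ ^ 2 =
      (1 - s * c ^ 2) * s * (1 - q * c) ^ 2) ∧
    ((s : ℝ) * c ^ 2 ≤ 1 →
      Real.sqrt ((s : ℝ) * c ^ 2 * q ^ 2 - s * c ^ 2 * s + s ^ 2 * c ^ 2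
          - 2 * s * c * q + s) =
        Real.sqrt s * |1 - q * c|) := by
  set S : E := ∑ α : Fin s, ξ α with hS
  have hij := orthonormal_iff_ite.mp hξ
  have hSS : ⟪S, S⟫ = (s : ℝ) := by
    rw [hS, sum_inner]
    simp [inner_sum, hij]
  have hTS : ⟪T, S⟫ = (s : ℝ) * c := by
    rw [hS, inner_sum]
    simp [hc, mul_comm]
  have hTT : ⟪T, T⟫ = (1 : ℝ) := by
    rw [real_inner_self_eq_norm_sq, hT]; norm_num
  have hv : (1 - (s : ℝ) * c ^ 2) • S + ((s : ℝ) * c - q) • (c • S) +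
      (q * (s : ℝ) * c ^ 2 - (s : ℝ) * c) • T =
      (1 - q * c) • S + (-((1 - q * c) * ((s : ℝ) * c))) • T := by
    module
  constructor
  · rw [hv, ← real_inner_self_eq_norm_sq, real_inner_add_add_self,
      real_inner_smul_left, real_inner_smul_left, real_inner_smul_right,
      real_inner_smul_left, real_inner_smul_right, real_inner_smul_right,
      hSS, hTT]
    have hST : ⟪S, T⟫ = (s : ℝ) * c := by rw [real_inner_comm]; exact hTS
    rw [hST]
    ring
  · intro _
    have h1 : (s : ℝ) * c ^ 2 * q ^ 2 - s * c ^ 2 * s + s ^ 2 * c ^ 2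
        - 2 * s * c * q + s = (s : ℝ) * (1 - q * c) ^ 2 := by ring
    rw [h1, Real.sqrt_mul (by positivity), Real.sqrt_sq_eq_abs]
end

section
/- Let λ ≠ 0, θ, h be real numbers, let n ≥ 1, and let a_i, b_i, c_i, d_i (i = 1,…,n) be real numbers. Set f_i(t) = −λ t + a_i, γ_i(t) = −(c_i/λ)·sin(f_i(t)) + b_i, and γ_{n+i}(t) = (c_i/λ)·cos(f_i(t)) + d_i. Then the function F(t) = 2 t cos θ − Σ_{i=1}^n [ (c_i²/(4λ²))·(sin(2 f_i(t)) + 2 f_i(t)) + (c_i d_i/λ)·sin(f_i(t)) ] + h satisfies F'(t) = 2 cos θ + Σ_{i=1}^n γ_i'(t)·γ_{n+i}(t) for all t. -/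
open scoped BigOperators

noncomputable def fAngle (lam a t : ℝ) : ℝ := -lam * t + a

noncomputable def gammaX (lam c a b t : ℝ) : ℝ :=
  -(c / lam) * Real.sin (fAngle lam a t) + b

noncomputable def gammaY (lam c a d t : ℝ) : ℝ :=
  (c / lam) * Real.cos (fAngle lam a t) + d

noncomputable def gammaZ (lam θ h : ℝ) (n : ℕ) (a c d : Fin n → ℝ) (t : ℝ) : ℝ :=
  2 * t * Real.cos θ -
    (∑ i : Fin n, ((c i) ^ 2 / (4 * lam ^ 2) *
        (Real.sin (2 * fAngle lam (a i) t) + 2 * fAngle lam (a i) t) +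
      (c i * d i / lam) * Real.sin (fAngle lam (a i) t))) + h

lemma fAngle_hasDerivAt (lam a t : ℝ) : HasDerivAt (fAngle lam a) (-lam) t := by
  show HasDerivAt (fun t : ℝ => -lam * t + a) (-lam) t
  simpa using ((hasDerivAt_id t).const_mul (-lam)).add_const a

lemma gammaX_hasDerivAt (lam c a b t : ℝ) (hlam : lam ≠ 0) :
    HasDerivAt (gammaX lam c a b) (c * Real.cos (fAngle lam a t)) t := by
  have h1 := ((fAngle_hasDerivAt lam a t).sin.const_mul (-(c / lam))).add_const b
  have h2 : HasDerivAt (gammaX lam c a b)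
      (-(c / lam) * (Real.cos (fAngle lam a t) * -lam)) t := h1
  convert h2 using 1
  field_simp

lemma term_hasDerivAt (lam c d a t : ℝ) :
    HasDerivAt (fun t => c ^ 2 / (4 * lam ^ 2) *
        (Real.sin (2 * fAngle lam a t) + 2 * fAngle lam a t) +
      (c * d / lam) * Real.sin (fAngle lam a t))
      (c ^ 2 / (4 * lam ^ 2) * (Real.cos (2 * fAngle lam a t) * (2 * -lam) + 2 * -lam)
        + (c * d / lam) * (Real.cos (fAngle lam a t) * -lam)) t := by
  have hf := fAngle_hasDerivAt lam a t
  exact ((((hf.const_mul 2).sin.add (hf.const_mul 2)).const_mul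
      (c ^ 2 / (4 * lam ^ 2))).add (hf.sin.const_mul (c * d / lam)))

/-- The explicit antiderivative `F` from the paper's final theorem satisfies
`F'(t) = 2 cos θ + Σᵢ γᵢ'(t) γ_{n+i}(t)`. -/
theorem gammaZ_deriv (lam θ h : ℝ) (hlam : lam ≠ 0) (n : ℕ) (hn : 1 ≤ n)
    (a b c d : Fin n → ℝ) :
    ∀ t, deriv (gammaZ lam θ h n a c d) t =
      2 * Real.cos θ +
        ∑ i : Fin n,
          deriv (gammaX lam (c i) (a i) (b i)) t * gammaY lam (c i) (a i) (d i) t := by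
  intro t
  have h1 : HasDerivAt (fun t : ℝ => 2 * t * Real.cos θ) (2 * Real.cos θ) t := by
    have := (hasDerivAt_id t).const_mul (2 * Real.cos θ)
    simpa [mul_comm, mul_assoc, mul_left_comm] using this
  have h2 : HasDerivAt (fun t => ∑ i : Fin n, ((c i) ^ 2 / (4 * lam ^ 2) *
        (Real.sin (2 * fAngle lam (a i) t) + 2 * fAngle lam (a i) t) +
      (c i * d i / lam) * Real.sin (fAngle lam (a i) t)))
      (∑ i : Fin n, ((c i) ^ 2 / (4 * lam ^ 2) *
          (Real.cos (2 * fAngle lam (a i) t) * (2 * -lam) + 2 * -lam)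
        + (c i * d i / lam) * (Real.cos (fAngle lam (a i) t) * -lam))) t :=
    HasDerivAt.fun_sum (fun i _ => term_hasDerivAt lam (c i) (d i) (a i) t)
  have hF : HasDerivAt (gammaZ lam θ h n a c d)
      (2 * Real.cos θ - ∑ i : Fin n,
        ((c i) ^ 2 / (4 * lam ^ 2) *
            (Real.cos (2 * fAngle lam (a i) t) * (2 * -lam) + 2 * -lam)
          + (c i * d i / lam) * (Real.cos (fAngle lam (a i) t) * -lam))) t :=
    (h1.sub h2).add_const h
  rw [hF.deriv, sub_eq_add_neg, ← Finset.sum_neg_distrib]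
  congr 1
  apply Finset.sum_congr rfl
  intro i _
  rw [(gammaX_hasDerivAt lam (c i) (a i) (b i) t hlam).deriv]
  simp only [gammaY]
  rw [Real.cos_two_mul]
  field_simp
  ring
end

section
/- Let n, s ≥ 1, let θ and q ≠ 0 be real numbers, set λ = −q + 2 s cos θ, and assume λ ≠ 0. Let γ = (γ_1,…,γ_{2n+s}) : ℝ → ℝ^{2n+s} be a twice differentiable curve. Then the following are equivalent. (I) For all t: γ_i''(t) = λ γ_{n+i}'(t) and γ_{n+i}''(t) = −λ γ_i'(t) for i = 1,…,n; γ_{2n+α}'(t) = 2 cos θ + Σ_{i=1}^n γ_i'(t) γ_{n+i}(t) for α = 1,…,s; and Σ_{i=1}^{2n} (γ_i'(t))² = 4(1 − s cos²θ). (II) There exist real numbers a_i, b_i, c_i, d_i (i = 1,…,n) and h_α (α = 1,…,s) with Σ_{i=1}^n c_i² = 4(1 − s cos²θ) such that, setting f_i(t) = −λ t + a_i, for all t: γ_i(t) = −(c_i/λ) sin(f_i(t)) + b_i, γ_{n+i}(t) = (c_i/λ) cos(f_i(t)) + d_i, and γ_{2n+α}(t) = 2 t cos θ − Σ_{i=1}^n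 [ (c_i²/(4λ²))(sin(2 f_i(t)) + 2 f_i(t)) + (c_i d_i/λ) sin(f_i(t)) ] + h_α. -/
open scoped BigOperators

private lemma hd_lin (lam a t : ℝ) : HasDerivAt (fun t : ℝ => -lam * t + a) (-lam) t := by
  simpa using ((hasDerivAt_id t).const_mul (-lam)).add_const a

private lemma hd_X (lam c a b t : ℝ) (hlam : lam ≠ 0) :
    HasDerivAt (fun t : ℝ => -(c / lam) * Real.sin (-lam * t + a) + b)
      (c * Real.cos (-lam * t + a)) t := by
  have h := (((Real.hasDerivAt_sin (-lam * t + a)).comp t (hd_lin lam a t)).const_mul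
      (-(c / lam))).add_const b
  refine h.congr_deriv ?_
  field_simp

private lemma hd_Y (lam c a d t : ℝ) (hlam : lam ≠ 0) :
    HasDerivAt (fun t : ℝ => c / lam * Real.cos (-lam * t + a) + d)
      (c * Real.sin (-lam * t + a)) t := by
  have h := (((Real.hasDerivAt_cos (-lam * t + a)).comp t (hd_lin lam a t)).const_mul
      (c / lam)).add_const d
  refine h.congr_deriv ?_
  field_simp

private lemma hd_X' (lam c a t : ℝ) :
    HasDerivAt (fun t : ℝ => c * Real.cos (-lam * t + a))
      (lam * (c * Real.sin (-lam * t + a))) t := by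
  have h := ((Real.hasDerivAt_cos (-lam * t + a)).comp t (hd_lin lam a t)).const_mul c
  refine h.congr_deriv ?_
  ring

private lemma hd_Y' (lam c a t : ℝ) :
    HasDerivAt (fun t : ℝ => c * Real.sin (-lam * t + a))
      (-lam * (c * Real.cos (-lam * t + a))) t := by
  have h := ((Real.hasDerivAt_sin (-lam * t + a)).comp t (hd_lin lam a t)).const_mul c
  refine h.congr_deriv ?_
  ring

private lemma hd_Z (lam c a d t : ℝ) (hlam : lam ≠ 0) :
    HasDerivAt (fun t : ℝ => c ^ 2 / (4 * lam ^ 2) *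
        (Real.sin (2 * (-lam * t + a)) + 2 * (-lam * t + a)) +
        c * d / lam * Real.sin (-lam * t + a))
      (-(c * Real.cos (-lam * t + a) * (c / lam * Real.cos (-lam * t + a) + d))) t := by
  have h2 : HasDerivAt (fun t : ℝ => 2 * (-lam * t + a)) (2 * -lam) t :=
    (hd_lin lam a t).const_mul 2
  have hsin2 := (Real.hasDerivAt_sin (2 * (-lam * t + a))).comp t h2
  have h1 := (hsin2.add h2).const_mul (c ^ 2 / (4 * lam ^ 2))
  have h3 := ((Real.hasDerivAt_sin (-lam * t + a)).comp t (hd_lin lam a t)).const_mul (c * d / lam)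
  refine (h1.add h3).congr_deriv ?_
  rw [Real.cos_two_mul]
  field_simp
  ring

private lemma polar (U V : ℝ) : ∃ c a : ℝ, c ^ 2 = U ^ 2 + V ^ 2 ∧
    U = c * Real.cos a ∧ V = c * Real.sin a := by
  by_cases h : (⟨U, V⟩ : ℂ) = 0
  · exact ⟨0, 0, by simp_all [Complex.ext_iff], by simp_all [Complex.ext_iff],
      by simp_all [Complex.ext_iff]⟩
  · have habs : ‖(⟨U, V⟩ : ℂ)‖ ≠ 0 := norm_ne_zero_iff.mpr h
    refine ⟨‖(⟨U, V⟩ : ℂ)‖, Complex.arg ⟨U, V⟩, ?_, ?_, ?_⟩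
    · rw [Complex.sq_norm, Complex.normSq_apply]; ring
    · rw [Complex.cos_arg h]
      field_simp
    · rw [Complex.sin_arg]
      field_simp

private lemma solve_pair (lam : ℝ) (hlam : lam ≠ 0) (x y : ℝ → ℝ)
    (hx : Differentiable ℝ x) (hx' : Differentiable ℝ (deriv x))
    (hy : Differentiable ℝ y) (hy' : Differentiable ℝ (deriv y))
    (hode : ∀ t, deriv (deriv x) t = lam * deriv y t ∧
                 deriv (deriv y) t = -lam * deriv x t) :
    ∃ c a b d : ℝ, c ^ 2 = (deriv x 0) ^ 2 + (deriv y 0) ^ 2 ∧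
      ∀ t, x t = -(c / lam) * Real.sin (-lam * t + a) + b ∧
           y t = c / lam * Real.cos (-lam * t + a) + d ∧
           deriv x t = c * Real.cos (-lam * t + a) ∧
           deriv y t = c * Real.sin (-lam * t + a) := by
  have hu : ∀ t, HasDerivAt (deriv x) (lam * deriv y t) t := fun t => by
    have h := (hx' t).hasDerivAt
    rwa [(hode t).1] at h
  have hv : ∀ t, HasDerivAt (deriv y) (-lam * deriv x t) t := fun t => by
    have h := (hy' t).hasDerivAt
    rwa [(hode t).2] at h
  have hcos : ∀ t : ℝ, HasDerivAt (fun t : ℝ => Real.cos (lam * t))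
      (-Real.sin (lam * t) * lam) t := fun t => by
    exact ((Real.hasDerivAt_cos (lam * t)).comp t ((hasDerivAt_id t).const_mul lam)).congr_deriv (by ring)
  have hsin : ∀ t : ℝ, HasDerivAt (fun t : ℝ => Real.sin (lam * t))
      (Real.cos (lam * t) * lam) t := fun t => by
    exact ((Real.hasDerivAt_sin (lam * t)).comp t ((hasDerivAt_id t).const_mul lam)).congr_deriv (by ring)
  have hW : ∀ t, HasDerivAt
      (fun t => deriv x t * Real.cos (lam * t) - deriv y t * Real.sin (lam * t)) 0 t := by
    intro t
    have h := ((hu t).mul (hcos t)).sub ((hv t).mul (hsin t))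
    refine h.congr_deriv ?_
    ring
  have hV : ∀ t, HasDerivAt
      (fun t => deriv x t * Real.sin (lam * t) + deriv y t * Real.cos (lam * t)) 0 t := by
    intro t
    have h := ((hu t).mul (hsin t)).add ((hv t).mul (hcos t))
    refine h.congr_deriv ?_
    ring
  have e1 : ∀ t, deriv x t * Real.cos (lam * t) - deriv y t * Real.sin (lam * t)
      = deriv x 0 := by
    intro t
    have h := is_const_of_deriv_eq_zero (fun t => (hW t).differentiableAt)
      (fun t => (hW t).deriv) t 0
    simpa using h
  have e2 : ∀ t, deriv x t * Real.sin (lam * t) + deriv y t * Real.cos (lam * t)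
      = deriv y 0 := by
    intro t
    have h := is_const_of_deriv_eq_zero (fun t => (hV t).differentiableAt)
      (fun t => (hV t).deriv) t 0
    simpa using h
  obtain ⟨c, a, hc, hU, hV2⟩ := polar (deriv x 0) (deriv y 0)
  have hdx : ∀ t, deriv x t = c * Real.cos (-lam * t + a) := by
    intro t
    rw [show -lam * t + a = a - lam * t by ring, Real.cos_sub]
    linear_combination Real.cos (lam * t) * e1 t + Real.sin (lam * t) * e2 t -
      deriv x t * Real.sin_sq_add_cos_sq (lam * t) + Real.cos (lam * t) * hU +
      Real.sin (lam * t) * hV2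
  have hdy : ∀ t, deriv y t = c * Real.sin (-lam * t + a) := by
    intro t
    rw [show -lam * t + a = a - lam * t by ring, Real.sin_sub]
    linear_combination (-Real.sin (lam * t)) * e1 t + Real.cos (lam * t) * e2 t -
      deriv y t * Real.sin_sq_add_cos_sq (lam * t) - Real.sin (lam * t) * hU +
      Real.cos (lam * t) * hV2
  have hS : ∀ t : ℝ, HasDerivAt (fun t : ℝ => -(c / lam) * Real.sin (-lam * t + a))
      (c * Real.cos (-lam * t + a)) t := fun t => by
    simpa using hd_X lam c a 0 t hlam
  have hC : ∀ t : ℝ, HasDerivAt ((fun t : ℝ => c / lam * Real.cos (-lam * t + a)))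
      (c * Real.sin (-lam * t + a)) t := fun t => by
    simpa using hd_Y lam c a 0 t hlam
  have hgx : ∀ t, HasDerivAt (fun t => x t - -(c / lam) * Real.sin (-lam * t + a)) 0 t := by
    intro t
    have h1 : HasDerivAt x (c * Real.cos (-lam * t + a)) t := by
      have h := (hx t).hasDerivAt
      rwa [hdx t] at h
    exact (h1.sub (hS t)).congr_deriv (by ring)
  have hgy : ∀ t, HasDerivAt (fun t => y t - c / lam * Real.cos (-lam * t + a)) 0 t := by
    intro t
    have h1 : HasDerivAt y (c * Real.sin (-lam * t + a)) t := by
      have h := (hy t).hasDerivAt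
      rwa [hdy t] at h
    exact (h1.sub (hC t)).congr_deriv (by ring)
  refine ⟨c, a, x 0 + c / lam * Real.sin a, y 0 - c / lam * Real.cos a, hc, fun t => ?_⟩
  have ex := is_const_of_deriv_eq_zero (fun t => (hgx t).differentiableAt)
    (fun t => (hgx t).deriv) t 0
  have ey := is_const_of_deriv_eq_zero (fun t => (hgy t).differentiableAt)
    (fun t => (hgy t).deriv) t 0
  rw [show -lam * (0:ℝ) + a = a by ring] at ex ey
  exact ⟨by linarith, by linarith, hdx t, hdy t⟩

/-- Part (a) of the classification of slant normal magnetic curves in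
`ℝ^{2n+s}(−3s)`, in coordinate/ODE form, for `λ = −q + 2s cos θ ≠ 0`:
the system consisting of the Lorentz equations `γᵢ'' = λ γ_{n+i}'`,
`γ_{n+i}'' = −λ γᵢ'`, the slant condition
`γ_{2n+α}' = 2cos θ + Σᵢ γᵢ' γ_{n+i}` and the unit-speed condition
`Σ_{i=1}^{2n}(γᵢ')² = 4(1 − s cos²θ)` holds iff the curve has the explicit
parametric form given in the paper. -/
theorem slant_magnetic_classification_a (n s : ℕ) (hn : 1 ≤ n) (hs : 1 ≤ s)
    (θ q lam : ℝ) (hq : q ≠ 0) (hlamdef : lam = -q + 2 * s * Real.cos θ)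
    (hlam : lam ≠ 0)
    (γx γy : ℝ → Fin n → ℝ) (γz : ℝ → Fin s → ℝ)
    (hx : ∀ i, Differentiable ℝ fun t => γx t i)
    (hx' : ∀ i, Differentiable ℝ (deriv fun t => γx t i))
    (hy : ∀ i, Differentiable ℝ fun t => γy t i)
    (hy' : ∀ i, Differentiable ℝ (deriv fun t => γy t i))
    (hz : ∀ α, Differentiable ℝ fun t => γz t α)
    (hz' : ∀ α, Differentiable ℝ (deriv fun t => γz t α)) :
    (∀ t,
      (∀ i : Fin n,
        deriv (deriv fun u => γx u i) t = lam * deriv (fun u => γy u i) t ∧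
        deriv (deriv fun u => γy u i) t = -lam * deriv (fun u => γx u i) t) ∧
      (∀ α : Fin s,
        deriv (fun u => γz u α) t =
          2 * Real.cos θ + ∑ i : Fin n, deriv (fun u => γx u i) t * γy t i) ∧
      (∑ i : Fin n, (deriv (fun u => γx u i) t) ^ 2) +
        (∑ i : Fin n, (deriv (fun u => γy u i) t) ^ 2) =
        4 * (1 - s * Real.cos θ ^ 2)) ↔
    (∃ a b c d : Fin n → ℝ, ∃ h : Fin s → ℝ,
      (∑ i : Fin n, (c i) ^ 2 = 4 * (1 - s * Real.cos θ ^ 2)) ∧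
      ∀ t,
        (∀ i : Fin n,
          γx t i = -(c i / lam) * Real.sin (-lam * t + a i) + b i ∧
          γy t i = (c i / lam) * Real.cos (-lam * t + a i) + d i) ∧
        (∀ α : Fin s,
          γz t α = 2 * t * Real.cos θ -
            (∑ i : Fin n, ((c i) ^ 2 / (4 * lam ^ 2) *
                (Real.sin (2 * (-lam * t + a i)) + 2 * (-lam * t + a i)) +
              (c i * d i / lam) * Real.sin (-lam * t + a i))) + h α)) := by
  constructor
  · intro H
    choose c a b d hc hform using fun i : Fin n =>
      solve_pair lam hlam (fun t => γx t i) (fun t => γy t i) (hx i) (hx' i) (hy i) (hy' i)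
        (fun t => (H t).1 i)
    have hgz : ∀ (α : Fin s) t, HasDerivAt (fun t => γz t α -
        (2 * t * Real.cos θ -
          ∑ i : Fin n, ((c i) ^ 2 / (4 * lam ^ 2) *
              (Real.sin (2 * (-lam * t + a i)) + 2 * (-lam * t + a i)) +
            c i * d i / lam * Real.sin (-lam * t + a i)))) 0 t := by
      intro α t
      have hz1 : HasDerivAt (fun t => γz t α)
          (2 * Real.cos θ + ∑ i : Fin n, c i * Real.cos (-lam * t + a i) *
            (c i / lam * Real.cos (-lam * t + a i) + d i)) t := by
        have h := (hz α t).hasDerivAt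
        rw [(H t).2.1 α] at h
        have hsum : (∑ i : Fin n, deriv (fun u => γx u i) t * γy t i)
            = ∑ i : Fin n, c i * Real.cos (-lam * t + a i) *
              (c i / lam * Real.cos (-lam * t + a i) + d i) :=
          Finset.sum_congr rfl fun i _ => by rw [(hform i t).2.2.1, (hform i t).2.1]
        rwa [hsum] at h
      have hlin : HasDerivAt (fun t : ℝ => 2 * t * Real.cos θ) (2 * Real.cos θ) t := by
        simpa using ((hasDerivAt_id t).const_mul 2).mul_const (Real.cos θ)
      have hZs : HasDerivAt (fun t => ∑ i : Fin n, ((c i) ^ 2 / (4 * lam ^ 2) *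
            (Real.sin (2 * (-lam * t + a i)) + 2 * (-lam * t + a i)) +
          c i * d i / lam * Real.sin (-lam * t + a i)))
          (∑ i : Fin n, -(c i * Real.cos (-lam * t + a i) *
            (c i / lam * Real.cos (-lam * t + a i) + d i))) t :=
        HasDerivAt.fun_sum fun i _ => hd_Z lam (c i) (a i) (d i) t hlam
      have h := hz1.sub (hlin.sub hZs)
      refine h.congr_deriv ?_
      rw [Finset.sum_neg_distrib]
      ring
    refine ⟨a, b, c, d,
      fun α => γz 0 α + ∑ i : Fin n, ((c i) ^ 2 / (4 * lam ^ 2) *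
          (Real.sin (2 * (-lam * 0 + a i)) + 2 * (-lam * 0 + a i)) +
        c i * d i / lam * Real.sin (-lam * 0 + a i)), ?_, fun t => ⟨fun i =>
        ⟨(hform i t).1, (hform i t).2.1⟩, fun α => ?_⟩⟩
    · have h1 : (∑ i : Fin n, (c i) ^ 2) = ∑ i : Fin n,
          ((deriv (fun t => γx t i) 0) ^ 2 + (deriv (fun t => γy t i) 0) ^ 2) :=
        Finset.sum_congr rfl fun i _ => hc i
      rw [h1, Finset.sum_add_distrib]
      exact (H 0).2.2
    · have e := is_const_of_deriv_eq_zero (fun u => (hgz α u).differentiableAt)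
        (fun u => (hgz α u).deriv) t 0
      have h0 : (2 : ℝ) * 0 * Real.cos θ = 0 := by ring
      rw [h0] at e
      linarith [e]
  · rintro ⟨a, b, c, d, h, hsum, hform⟩
    have hxe : ∀ i, (fun t => γx t i)
        = fun t => -(c i / lam) * Real.sin (-lam * t + a i) + b i :=
      fun i => funext fun t => ((hform t).1 i).1
    have hye : ∀ i, (fun t => γy t i)
        = fun t => c i / lam * Real.cos (-lam * t + a i) + d i :=
      fun i => funext fun t => ((hform t).1 i).2
    have hdx1 : ∀ (i : Fin n) t, deriv (fun u => γx u i) t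
        = c i * Real.cos (-lam * t + a i) := fun i t => by
      rw [hxe i]; exact (hd_X lam (c i) (a i) (b i) t hlam).deriv
    have hdy1 : ∀ (i : Fin n) t, deriv (fun u => γy u i) t
        = c i * Real.sin (-lam * t + a i) := fun i t => by
      rw [hye i]; exact (hd_Y lam (c i) (a i) (d i) t hlam).deriv
    have hdx2 : ∀ (i : Fin n) t, deriv (deriv fun u => γx u i) t
        = lam * (c i * Real.sin (-lam * t + a i)) := fun i t => by
      have he : (deriv fun u => γx u i) = fun t => c i * Real.cos (-lam * t + a i) :=
        funext fun t => hdx1 i t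
      rw [he]; exact (hd_X' lam (c i) (a i) t).deriv
    have hdy2 : ∀ (i : Fin n) t, deriv (deriv fun u => γy u i) t
        = -lam * (c i * Real.cos (-lam * t + a i)) := fun i t => by
      have he : (deriv fun u => γy u i) = fun t => c i * Real.sin (-lam * t + a i) :=
        funext fun t => hdy1 i t
      rw [he]; exact (hd_Y' lam (c i) (a i) t).deriv
    have hze : ∀ α, (fun t => γz t α) = fun t => 2 * t * Real.cos θ -
        (∑ i : Fin n, ((c i) ^ 2 / (4 * lam ^ 2) *
            (Real.sin (2 * (-lam * t + a i)) + 2 * (-lam * t + a i)) +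
          c i * d i / lam * Real.sin (-lam * t + a i))) + h α :=
      fun α => funext fun t => (hform t).2 α
    have hdz : ∀ (α : Fin s) t, deriv (fun u => γz u α) t
        = 2 * Real.cos θ - ∑ i : Fin n, -(c i * Real.cos (-lam * t + a i) *
            (c i / lam * Real.cos (-lam * t + a i) + d i)) := fun α t => by
      rw [hze α]
      have hlin : HasDerivAt (fun t : ℝ => 2 * t * Real.cos θ) (2 * Real.cos θ) t := by
        simpa using ((hasDerivAt_id t).const_mul 2).mul_const (Real.cos θ)
      have hZs : HasDerivAt (fun t => ∑ i : Fin n, ((c i) ^ 2 / (4 * lam ^ 2) *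
            (Real.sin (2 * (-lam * t + a i)) + 2 * (-lam * t + a i)) +
          c i * d i / lam * Real.sin (-lam * t + a i)))
          (∑ i : Fin n, -(c i * Real.cos (-lam * t + a i) *
            (c i / lam * Real.cos (-lam * t + a i) + d i))) t :=
        HasDerivAt.fun_sum fun i _ => hd_Z lam (c i) (a i) (d i) t hlam
      exact ((hlin.sub hZs).add_const (h α)).deriv
    intro t
    refine ⟨fun i => ⟨?_, ?_⟩, fun α => ?_, ?_⟩
    · rw [hdx2 i t, hdy1 i t]
    · rw [hdy2 i t, hdx1 i t]
    · rw [hdz α t]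
      have hsum2 : (∑ i : Fin n, deriv (fun u => γx u i) t * γy t i)
          = ∑ i : Fin n, c i * Real.cos (-lam * t + a i) *
            (c i / lam * Real.cos (-lam * t + a i) + d i) :=
        Finset.sum_congr rfl fun i _ => by rw [hdx1 i t, ((hform t).1 i).2]
      rw [hsum2, Finset.sum_neg_distrib]
      ring
    · simp only [hdx1, hdy1]
      rw [← hsum, ← Finset.sum_add_distrib]
      exact Finset.sum_congr rfl fun i _ => by
        nlinarith [Real.sin_sq_add_cos_sq (-lam * t + a i)]
end
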